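/- Let X^n, Y^n be finite-valued random sequences with joint distribution P(x^n,y^n) = Q(x^n) P(y^n||x^n) where Q is the uniform distribution on X^n and P(y^n||x^n) = prod_i P(y_i|x^i, y^{i-1}) is a channel causal conditioning distribution. If the directed information I(X^n -> Y^n) = 0 under this uniform input, then P(y^n||x^n) = P(y^n) for all x^n in X^n and y^n in Y^n, where P(y^n) is the marginal output distribution; consequently, max over all causal conditioning input distributions Q(x^n||y^{n-1}) of I(X^n -> Y^n) equals 0. -/

import Mathlib

lemma aux_ge (p q : ℝ) (hp : 0 ≤ p) (hq : 0 ≤ q) (h0 : q = 0 → p = 0) :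
    p - q ≤ p * Real.log (p / q) := by
  rcases eq_or_lt_of_le hp with h | hp
  · simp [← h]; linarith
  · rcases eq_or_lt_of_le hq with h | hq
    · exact absurd (h0 h.symm) hp.ne'
    · have hlog := Real.log_le_sub_one_of_pos (div_pos hq hp)
      have hld : Real.log (q / p) = Real.log q - Real.log p := Real.log_div hq.ne' hp.ne'
      have hpd : Real.log (p / q) = Real.log p - Real.log q := Real.log_div hp.ne' hq.ne'
      have h1 : p * (q / p - 1) = q - p := by field_simp
      have h2 := mul_le_mul_of_nonneg_left hlog hp.le
      rw [hld] at h2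
      rw [hpd]
      nlinarith

lemma aux_eq (p q : ℝ) (hp : 0 ≤ p) (hq : 0 ≤ q) (h0 : q = 0 → p = 0)
    (h : p * Real.log (p / q) = p - q) : p = q := by
  rcases eq_or_lt_of_le hp with hp' | hp'
  · have : q = 0 := by simpa [← hp'] using h.symm
    rw [← hp', this]
  · rcases eq_or_lt_of_le hq with hq' | hq'
    · exact absurd (h0 hq'.symm) hp'.ne'
    · by_contra hne
      have hqp : q / p ≠ 1 := by
        intro hh
        apply hne
        field_simp at hh
        linarith
      have hlog := Real.log_lt_sub_one_of_pos (div_pos hq' hp') hqp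
      have hld : Real.log (q / p) = Real.log q - Real.log p := Real.log_div hq'.ne' hp'.ne'
      have hpd : Real.log (p / q) = Real.log p - Real.log q := Real.log_div hp'.ne' hq'.ne'
      have h1 : p * (q / p - 1) = q - p := by field_simp
      have h2 := mul_lt_mul_of_pos_left hlog hp'
      rw [hld] at h2
      rw [hpd] at h
      nlinarith



/-- `Q` is a causal conditioning input distribution `Q(x^n ‖ y^{n-1})`:
nonnegative, normalized for every `y^n`, and the marginal of any length-`i`
prefix of `x^n` depends on `y^n` only through its first `i-1` coordinates. -/
def IsCausalIn {X Y : Type} [Fintype X] [DecidableEq X] [Fintype Y] (n : ℕ)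
    (Q : (Fin n → X) → (Fin n → Y) → ℝ) : Prop :=
  (∀ x y, 0 ≤ Q x y) ∧ (∀ y, ∑ x, Q x y = 1) ∧
  ∀ (i : ℕ), i ≤ n → ∀ (x : Fin n → X) (y y' : Fin n → Y),
    (∀ j : Fin n, (j : ℕ) + 1 < i → y j = y' j) →
    (∑ x' ∈ Finset.univ.filter
        (fun x' : Fin n → X => ∀ j : Fin n, (j : ℕ) < i → x' j = x j), Q x' y) =
      ∑ x' ∈ Finset.univ.filter
        (fun x' : Fin n → X => ∀ j : Fin n, (j : ℕ) < i → x' j = x j), Q x' y'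

/-- `P` is a channel causal conditioning distribution `P(y^n ‖ x^n)`:
nonnegative, normalized for every `x^n`, and the marginal of any length-`i`
prefix of `y^n` depends on `x^n` only through its first `i` coordinates. -/
def IsCausalCh {X Y : Type} [Fintype X] [Fintype Y] [DecidableEq Y] (n : ℕ)
    (P : (Fin n → Y) → (Fin n → X) → ℝ) : Prop :=
  (∀ y x, 0 ≤ P y x) ∧ (∀ x, ∑ y, P y x = 1) ∧
  ∀ (i : ℕ), i ≤ n → ∀ (y : Fin n → Y) (x x' : Fin n → X),
    (∀ j : Fin n, (j : ℕ) < i → x j = x' j) →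
    (∑ y' ∈ Finset.univ.filter
        (fun y' : Fin n → Y => ∀ j : Fin n, (j : ℕ) < i → y' j = y j), P y' x) =
      ∑ y' ∈ Finset.univ.filter
        (fun y' : Fin n → Y => ∀ j : Fin n, (j : ℕ) < i → y' j = y j), P y' x'

/-- Directed information functional
`I(Q;P) = ∑_{x^n,y^n} Q(x^n‖y^{n-1}) P(y^n‖x^n) log (P(y^n‖x^n) / ∑_{x'} Q(x'‖y^{n-1}) P(y^n‖x'))`. -/
noncomputable def DI {X Y : Type} [Fintype X] [Fintype Y] (n : ℕ)
    (Q : (Fin n → X) → (Fin n → Y) → ℝ)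
    (P : (Fin n → Y) → (Fin n → X) → ℝ) : ℝ :=
  ∑ x, ∑ y, Q x y * P y x * Real.log (P y x / ∑ x', Q x' y * P y x')


/-- Lemma 8 of the paper: if under the uniform input distribution on `X^n` the directed
information is zero, then `P(y^n ‖ x^n) = P(y^n)` for all `x^n, y^n` (where `P(y^n)` is
the marginal output distribution), and consequently the maximum of the directed
information over all causal conditioning input distributions is zero. -/

theorem directed_info_zero_iff {X Y : Type} [Fintype X] [DecidableEq X] [Nonempty X]
    [Fintype Y] [DecidableEq Y] (n : ℕ)
    (P : (Fin n → Y) → (Fin n → X) → ℝ) (hP : IsCausalCh n P)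
    (h0 : DI n (fun _ _ => ((Fintype.card X : ℝ) ^ n)⁻¹) P = 0) :
    (∀ (x : Fin n → X) (y : Fin n → Y),
        P y x = ∑ x', ((Fintype.card X : ℝ) ^ n)⁻¹ * P y x') ∧
      IsGreatest {r : ℝ | ∃ Q, IsCausalIn n Q ∧ r = DI n Q P} 0 := by
  obtain ⟨hPnn, hPsum, -⟩ := hP
  have hcardpos : (0:ℝ) < (Fintype.card X : ℝ) := by
    exact_mod_cast Fintype.card_pos
  set c : ℝ := ((Fintype.card X : ℝ) ^ n)⁻¹ with hc_def
  have hc : 0 < c := by positivity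
  set M : (Fin n → Y) → ℝ := fun y => ∑ x', c * P y x' with hM_def
  have hMnn : ∀ y, 0 ≤ M y := fun y =>
    Finset.sum_nonneg fun x _ => mul_nonneg hc.le (hPnn y x)
  have hM0 : ∀ y x, M y = 0 → P y x = 0 := by
    intro y x h
    have := (Finset.sum_eq_zero_iff_of_nonneg
      (fun x' _ => mul_nonneg hc.le (hPnn y x'))).mp h x (Finset.mem_univ x)
    have := mul_eq_zero.mp this
    rcases this with h | h
    · exact absurd h hc.ne'
    · exact h
  have hcardfun : (Fintype.card (Fin n → X) : ℝ) = (Fintype.card X : ℝ) ^ n := by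
    rw [Fintype.card_fun, Fintype.card_fin]
    push_cast
    ring
  have hcmul : (Fintype.card (Fin n → X) : ℝ) * c = 1 := by
    rw [hcardfun, hc_def, mul_inv_cancel₀ (by positivity)]
  -- total masses
  have hsumP : ∑ x : Fin n → X, ∑ y : Fin n → Y, c * P y x = 1 := by
    have : ∀ x : Fin n → X, ∑ y : Fin n → Y, c * P y x = c := by
      intro x
      rw [← Finset.mul_sum, hPsum x, mul_one]
    rw [Finset.sum_congr rfl fun x _ => this x, Finset.sum_const, nsmul_eq_mul, Finset.card_univ, hcmul]
  have hsumM : ∑ x : Fin n → X, ∑ y : Fin n → Y, c * M y = 1 := by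
    have hMy : ∑ y : Fin n → Y, c * M y = c := by
      rw [← Finset.mul_sum]
      have : ∑ y : Fin n → Y, M y = 1 := by
        simp only [hM_def]
        rw [Finset.sum_comm]
        exact hsumP
      rw [this, mul_one]
    rw [Finset.sum_congr rfl fun x _ => hMy, Finset.sum_const, nsmul_eq_mul, Finset.card_univ, hcmul]
  -- rewrite DI under uniform input
  have hDI : DI n (fun _ _ => c) P
      = ∑ x : Fin n → X, ∑ y : Fin n → Y, c * (P y x * Real.log (P y x / M y)) := by
    unfold DI
    apply Finset.sum_congr rfl
    intro x _
    apply Finset.sum_congr rfl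
    intro y _
    have hdiv : P y x / ∑ x', c * P y x' = P y x / M y := rfl
    rw [hdiv]; ring
  -- term function, nonneg, sums to zero
  set t : (Fin n → X) → (Fin n → Y) → ℝ :=
    fun x y => c * (P y x * Real.log (P y x / M y)) - (c * P y x - c * M y) with ht_def
  have htnn : ∀ x y, 0 ≤ t x y := by
    intro x y
    have h := aux_ge (P y x) (M y) (hPnn y x) (hMnn y) (hM0 y x)
    have : c * (P y x - M y) ≤ c * (P y x * Real.log (P y x / M y)) :=
      mul_le_mul_of_nonneg_left h hc.le
    simp only [ht_def]
    nlinarith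
  have htsum : ∑ x : Fin n → X, ∑ y : Fin n → Y, t x y = 0 := by
    simp only [ht_def]
    rw [Finset.sum_congr rfl fun x _ => Finset.sum_sub_distrib _ _]
    rw [Finset.sum_sub_distrib]
    rw [Finset.sum_congr rfl fun x _ => Finset.sum_sub_distrib _ _]
    rw [Finset.sum_sub_distrib]
    rw [hsumP, hsumM, ← hDI, h0]
    ring
  have ht0 : ∀ x y, t x y = 0 := by
    intro x y
    have h1 : ∀ x : Fin n → X, ∑ y : Fin n → Y, t x y = 0 := by
      intro x'
      have := (Finset.sum_eq_zero_iff_of_nonneg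
        (fun x'' _ => Finset.sum_nonneg fun y' _ => htnn x'' y')).mp htsum x' (Finset.mem_univ x')
      exact this
    exact (Finset.sum_eq_zero_iff_of_nonneg
      (fun y' _ => htnn x y')).mp (h1 x) y (Finset.mem_univ y)
  have key : ∀ (x : Fin n → X) (y : Fin n → Y), P y x = M y := by
    intro x y
    have h := ht0 x y
    simp only [ht_def] at h
    have h' : P y x * Real.log (P y x / M y) = P y x - M y := by
      have := h
      field_simp at this
      nlinarith [this]
    exact aux_eq (P y x) (M y) (hPnn y x) (hMnn y) (hM0 y x) h'
  refine ⟨fun x y => key x y, ?_, ?_⟩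
  · -- 0 is in the set: uniform input is causal
    refine ⟨fun _ _ => c, ⟨fun _ _ => hc.le, ?_, ?_⟩, h0.symm⟩
    · intro y
      rw [Finset.sum_const, nsmul_eq_mul, Finset.card_univ, hcmul]
    · intro i _ x y y' _
      rfl
  · -- upper bound: every causal Q gives DI = 0
    rintro r ⟨Q, ⟨hQnn, hQsum, -⟩, rfl⟩
    have : DI n Q P = 0 := by
      unfold DI
      apply Finset.sum_eq_zero
      intro x _
      apply Finset.sum_eq_zero
      intro y _
      have hsum' : ∑ x', Q x' y * P y x' = M y := by
        calc ∑ x', Q x' y * P y x' = ∑ x', Q x' y * M y := by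
              apply Finset.sum_congr rfl
              intro x' _
              rw [key x' y]
          _ = (∑ x', Q x' y) * M y := by rw [Finset.sum_mul]
          _ = M y := by rw [hQsum y, one_mul]
      rw [hsum', key x y]
      rcases eq_or_lt_of_le (hMnn y) with h | h
      · rw [← h]; ring
      · rw [div_self h.ne', Real.log_one, mul_zero]
    rw [this]
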